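/- There exist constants A > a > 1 such that for Lebesgue-almost every α ∈ (0,1), a < q_k(α)^{1/k} < A for all sufficiently large k, where q_k(α) are the convergent denominators of α. -/

import Mathlib

open Filter MeasureTheory Real

/-- Distance from `x` to the nearest integer. -/
noncomputable def nd (x : ℝ) : ℝ := |x - round x|

/-- The Gauss map `x ↦ frac (1/x)` (with `0 ↦ 0`). -/
noncomputable def gaussMap (x : ℝ) : ℝ := Int.fract x⁻¹

/-- The `k`-th partial quotient of the continued fraction of `α` (for `k ≥ 1`). -/
noncomputable def cfA (α : ℝ) (k : ℕ) : ℕ := ⌊(gaussMap^[k-1] α)⁻¹⌋₊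

/-- Denominators of the continued fraction convergents of `α`. -/
noncomputable def cfQ (α : ℝ) : ℕ → ℕ
  | 0 => 1
  | 1 => cfA α 1
  | (k+2) => cfA α (k+2) * cfQ α (k+1) + cfQ α k

/-- Numerators of the continued fraction convergents of `α`. -/
noncomputable def cfP (α : ℝ) : ℕ → ℕ
  | 0 => 0
  | 1 => 1
  | (k+2) => cfA α (k+2) * cfP α (k+1) + cfP α k

/-- `S α M = ∑_{m=1}^M 1/‖mα‖`. -/
noncomputable def S (α : ℝ) (M : ℕ) : ℝ := ∑ m ∈ Finset.Icc 1 M, 1 / nd (m * α)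

open Set
open scoped ENNReal

noncomputable def wE (t : ℝ) : ℝ≥0∞ := ENNReal.ofReal t ^ (-(1/2) : ℝ)

noncomputable def PP (k : ℕ) (x : ℝ) : ℝ≥0∞ := ∏ i ∈ Finset.range k, wE (gaussMap^[i] x)

lemma measurable_gaussMap : Measurable gaussMap := measurable_fract.comp measurable_inv

lemma measurable_wE : Measurable wE :=
  ENNReal.continuous_rpow_const.measurable.comp ENNReal.measurable_ofReal

lemma measurable_PP (k : ℕ) : Measurable (PP k) :=
  Finset.measurable_prod _ fun i _ => measurable_wE.comp (measurable_gaussMap.iterate i)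

lemma PP_succ (k : ℕ) (x : ℝ) : PP (k+1) x = wE x * PP k (gaussMap x) := by
  rw [PP, Finset.prod_range_succ', mul_comm]
  simp only [Function.iterate_succ_apply, Function.iterate_zero_apply, PP]

noncomputable def CC : ℝ≥0∞ := ∑' n : ℕ, ENNReal.ofReal (((n:ℝ)+1) ^ (-(3/2) : ℝ))

lemma summable_aux : Summable (fun n : ℕ => ((n:ℝ)+1) ^ (-(3/2) : ℝ)) := by
  have h : Summable (fun n : ℕ => (n : ℝ) ^ (-(3/2) : ℝ)) :=
    Real.summable_nat_rpow.mpr (by norm_num)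
  have := (summable_nat_add_iff 1).mpr h
  refine this.congr fun n => ?_
  push_cast
  ring_nf

lemma CC_lt_top : CC < ∞ := by
  rw [CC, ← ENNReal.ofReal_tsum_of_nonneg (fun n => Real.rpow_nonneg (by positivity) _) summable_aux]
  exact ENNReal.ofReal_lt_top

lemma CC_pos : 0 < CC := by
  rw [CC]
  refine lt_of_lt_of_le ?_ (ENNReal.le_tsum 0)
  simp only [Nat.cast_zero, zero_add, Real.one_rpow]
  norm_num
lemma lintegral_image_eq_lintegral_abs_deriv_mul' {s : Set ℝ} {f f' : ℝ → ℝ}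
    (hs : MeasurableSet s) (hf' : ∀ x ∈ s, HasDerivWithinAt f (f' x) s x)
    (hf : InjOn f s) (g : ℝ → ℝ≥0∞) :
    ∫⁻ x in f '' s, g x = ∫⁻ x in s, ENNReal.ofReal |f' x| * g (f x) := by
  simpa only [ContinuousLinearMap.det_toSpanSingleton] using
    lintegral_image_eq_lintegral_abs_det_fderiv_mul volume hs
      (fun x hx => (hf' x hx).hasFDerivWithinAt) hf g

example (n : ℕ) : True := trivial

-- image lemma
lemma img_aux (c : ℝ) (hc : 0 < c) :
    (fun y : ℝ => (y + c)⁻¹) '' Ioo 0 1 = Ioo (c+1)⁻¹ c⁻¹ := by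
  ext x
  constructor
  · rintro ⟨y, hy, rfl⟩
    have h1 : 0 < y + c := by nlinarith [hy.1]
    constructor
    · apply inv_strictAnti₀ h1 (by nlinarith [hy.2])
    · apply inv_strictAnti₀ (by positivity) (by nlinarith [hy.1])
  · rintro ⟨h1, h2⟩
    have hx0 : 0 < x := lt_trans (by positivity) h1
    refine ⟨x⁻¹ - c, ⟨?_, ?_⟩, ?_⟩
    · have := (inv_lt_inv₀ (by positivity) hx0).mpr h2
      rw [inv_inv] at this
      linarith
    · have := (inv_lt_inv₀ hx0 (by positivity)).mpr h1
      rw [inv_inv] at this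
      linarith
    · simp [hx0.ne']

lemma piece (F : ℝ → ℝ≥0∞) (hF : Measurable F) (n : ℕ) :
    ∫⁻ x in Ioc ((((n:ℝ)+1)+1)⁻¹) (((n:ℝ)+1)⁻¹), wE x * F (gaussMap x)
      ≤ ENNReal.ofReal (((n:ℝ)+1) ^ (-(3/2):ℝ)) * ∫⁻ y in Ioo (0:ℝ) 1, F y := by
  set c : ℝ := (n:ℝ) + 1 with hcdef
  have hc : 0 < c := by positivity
  have hderiv : ∀ y ∈ Ioo (0:ℝ) 1,
      HasDerivWithinAt (fun y : ℝ => (y + c)⁻¹) (-(((y + c)^2)⁻¹)) (Ioo 0 1) y := by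
    intro y hy
    have hyc : y + c ≠ 0 := by nlinarith [hy.1]
    have h1 : HasDerivWithinAt (fun y : ℝ => y + c) 1 (Ioo 0 1) y :=
      (hasDerivAt_id y).add_const c |>.hasDerivWithinAt
    simpa [neg_div, one_div] using h1.fun_inv hyc
  have hinj : InjOn (fun y : ℝ => (y + c)⁻¹) (Ioo 0 1) := by
    intro a ha b hb hab
    simp only at hab
    have ha' : a + c ≠ 0 := by nlinarith [ha.1]
    have hb' : b + c ≠ 0 := by nlinarith [hb.1]
    field_simp at hab
    linarith
  have key : ∫⁻ x in Ioo ((c+1)⁻¹) c⁻¹, wE x * F (gaussMap x)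
      = ∫⁻ y in Ioo (0:ℝ) 1,
          ENNReal.ofReal |(-(((y + c)^2)⁻¹))| * (wE ((y + c)⁻¹) * F (gaussMap ((y + c)⁻¹))) := by
    rw [← img_aux c hc]
    exact lintegral_image_eq_lintegral_abs_deriv_mul' measurableSet_Ioo hderiv hinj _
  have hIoc : ∫⁻ x in Ioc ((c+1)⁻¹) c⁻¹, wE x * F (gaussMap x)
      = ∫⁻ x in Ioo ((c+1)⁻¹) c⁻¹, wE x * F (gaussMap x) :=
    (setLIntegral_congr Ioo_ae_eq_Ioc).symm
  have hcc : (((n:ℝ)+1)+1)⁻¹ = (c+1)⁻¹ := by rw [hcdef]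
  rw [hcc, hIoc, key]
  have hbound : ∀ y ∈ Ioo (0:ℝ) 1,
      ENNReal.ofReal |(-(((y + c)^2)⁻¹))| * (wE ((y + c)⁻¹) * F (gaussMap ((y + c)⁻¹)))
        ≤ ENNReal.ofReal (c ^ (-(3/2):ℝ)) * F y := by
    intro y hy
    have hyc : 0 < y + c := by nlinarith [hy.1]
    -- gaussMap ((y+c)⁻¹) = y
    have hg : gaussMap ((y + c)⁻¹) = y := by
      rw [gaussMap, inv_inv, hcdef, ← add_assoc]
      have : y + (n:ℝ) + 1 = y + ((n+1 : ℕ) : ℝ) := by push_cast; ring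
      rw [this, Int.fract_add_natCast, Int.fract_eq_self.mpr ⟨hy.1.le, hy.2⟩]
    rw [hg]
    -- jacobian factor
    have hj : |(-(((y + c)^2)⁻¹))| = (y+c) ^ (-2:ℝ) := by
      rw [abs_neg, abs_inv, abs_of_pos (by positivity), Real.rpow_neg hyc.le,
        Real.rpow_two]
    have hw : wE ((y + c)⁻¹) = ENNReal.ofReal ((y+c) ^ ((1:ℝ)/2)) := by
      rw [wE, ENNReal.ofReal_rpow_of_pos (by positivity),
        Real.inv_rpow hyc.le, Real.rpow_neg hyc.le, inv_inv]
    rw [hj, hw, ← mul_assoc, ← ENNReal.ofReal_mul (by positivity), ← Real.rpow_add hyc]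
    have h32 : (-2:ℝ) + 1/2 = -(3/2) := by norm_num
    rw [h32]
    refine mul_le_mul_left (ENNReal.ofReal_le_ofReal ?_) _
    exact Real.rpow_le_rpow_of_nonpos hc (by linarith [hy.1]) (by norm_num)
  calc ∫⁻ y in Ioo (0:ℝ) 1,
          ENNReal.ofReal |(-(((y + c)^2)⁻¹))| * (wE ((y + c)⁻¹) * F (gaussMap ((y + c)⁻¹)))
      ≤ ∫⁻ y in Ioo (0:ℝ) 1, ENNReal.ofReal (c ^ (-(3/2):ℝ)) * F y :=
        setLIntegral_mono (hF.const_mul _) hbound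
    _ = ENNReal.ofReal (c ^ (-(3/2):ℝ)) * ∫⁻ y in Ioo (0:ℝ) 1, F y :=
        lintegral_const_mul _ hF

lemma cover_aux : Ioo (0:ℝ) 1 ⊆ ⋃ n : ℕ, Ioc ((((n:ℝ)+1)+1)⁻¹) (((n:ℝ)+1)⁻¹) := by
  intro x hx
  have hx0 : 0 < x := hx.1
  have hinv1 : 1 < x⁻¹ := by
    rw [lt_inv_comm₀ (by norm_num) hx0]
    simpa using hx.2
  set a := ⌊x⁻¹⌋₊ with ha
  have ha1 : 1 ≤ a := Nat.le_floor (by exact_mod_cast hinv1.le)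
  refine mem_iUnion.mpr ⟨a - 1, ?_⟩
  have hcast : ((a-1 : ℕ):ℝ) + 1 = (a:ℝ) := by
    have := Nat.sub_add_cancel ha1
    exact_mod_cast congrArg (Nat.cast : ℕ → ℝ) this
  have hapos : (0:ℝ) < a := by exact_mod_cast ha1
  constructor
  · have h2 : x⁻¹ < (a:ℝ) + 1 := Nat.lt_floor_add_one _
    rw [hcast]
    calc ((a:ℝ)+1)⁻¹ < x⁻¹⁻¹ := by
          apply inv_strictAnti₀ (by positivity) h2
      _ = x := inv_inv x
  · have h3 : (a:ℝ) ≤ x⁻¹ := Nat.floor_le (by positivity)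
    rw [hcast]
    calc x = x⁻¹⁻¹ := (inv_inv x).symm
      _ ≤ (a:ℝ)⁻¹ := by
          apply inv_anti₀ hapos h3

lemma gauss_step (F : ℝ → ℝ≥0∞) (hF : Measurable F) :
    ∫⁻ x in Ioo (0:ℝ) 1, wE x * F (gaussMap x) ≤ CC * ∫⁻ y in Ioo (0:ℝ) 1, F y := by
  calc ∫⁻ x in Ioo (0:ℝ) 1, wE x * F (gaussMap x)
      ≤ ∫⁻ x in ⋃ n : ℕ, Ioc ((((n:ℝ)+1)+1)⁻¹) (((n:ℝ)+1)⁻¹), wE x * F (gaussMap x) :=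
        lintegral_mono_set cover_aux
    _ ≤ ∑' n : ℕ, ∫⁻ x in Ioc ((((n:ℝ)+1)+1)⁻¹) (((n:ℝ)+1)⁻¹), wE x * F (gaussMap x) :=
        lintegral_iUnion_le _ _
    _ ≤ ∑' n : ℕ, ENNReal.ofReal (((n:ℝ)+1) ^ (-(3/2):ℝ)) * ∫⁻ y in Ioo (0:ℝ) 1, F y :=
        ENNReal.tsum_le_tsum fun n => piece F hF n
    _ = CC * ∫⁻ y in Ioo (0:ℝ) 1, F y := ENNReal.tsum_mul_right

lemma lintegral_PP_le (k : ℕ) : ∫⁻ x in Ioo (0:ℝ) 1, PP k x ≤ CC ^ k := by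
  induction k with
  | zero =>
    simp only [PP, Finset.range_zero, Finset.prod_empty, pow_zero]
    rw [setLIntegral_one, Real.volume_Ioo]
    simp
  | succ k ih =>
    have heq : ∫⁻ x in Ioo (0:ℝ) 1, PP (k+1) x
        = ∫⁻ x in Ioo (0:ℝ) 1, wE x * PP k (gaussMap x) := by
      simp only [PP_succ]
    rw [heq, pow_succ']
    exact (gauss_step (PP k) (measurable_PP k)).trans (mul_le_mul_right ih CC)

section arith
variable {α : ℝ}

lemma gauss_mem (h : Irrational α) (h0 : α ∈ Ioo (0:ℝ) 1) :
    Irrational (gaussMap α) ∧ gaussMap α ∈ Ioo (0:ℝ) 1 := by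
  have hinv : Irrational α⁻¹ := h.inv
  have hirr : Irrational (gaussMap α) := by
    rw [gaussMap, Int.fract]
    exact hinv.sub_intCast _
  have hne : gaussMap α ≠ 0 := by
    intro hz
    rw [hz] at hirr
    exact (Rat.not_irrational 0) (by simpa using hirr)
  refine ⟨hirr, lt_of_le_of_ne (Int.fract_nonneg _) (Ne.symm hne), Int.fract_lt_one _⟩

lemma iter_mem (h : Irrational α) (h0 : α ∈ Ioo (0:ℝ) 1) (i : ℕ) :
    Irrational (gaussMap^[i] α) ∧ gaussMap^[i] α ∈ Ioo (0:ℝ) 1 := by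
  induction i with
  | zero => exact ⟨h, h0⟩
  | succ i ih =>
    rw [Function.iterate_succ_apply']
    exact gauss_mem ih.1 ih.2

lemma cfA_succ (i : ℕ) : cfA α (i+1) = ⌊(gaussMap^[i] α)⁻¹⌋₊ := rfl

lemma one_le_cfA (h : Irrational α) (h0 : α ∈ Ioo (0:ℝ) 1) (i : ℕ) :
    1 ≤ cfA α (i+1) := by
  rcases iter_mem h h0 i with ⟨_, ht0, ht1⟩
  rw [cfA_succ]
  refine Nat.le_floor ?_
  rw [Nat.cast_one, le_inv_comm₀ (by norm_num) ht0]
  simpa using ht1.le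

lemma cfA_le (h : Irrational α) (h0 : α ∈ Ioo (0:ℝ) 1) (i : ℕ) :
    (cfA α (i+1) : ℝ) ≤ (gaussMap^[i] α)⁻¹ := by
  rcases iter_mem h h0 i with ⟨_, ht0, _⟩
  rw [cfA_succ]
  exact Nat.floor_le (by positivity)

lemma cfQ_mono (h : Irrational α) (h0 : α ∈ Ioo (0:ℝ) 1) (k : ℕ) :
    cfQ α k ≤ cfQ α (k+1) := by
  cases k with
  | zero => simpa [cfQ] using one_le_cfA h h0 0
  | succ k =>
    show cfQ α (k+1) ≤ cfA α (k+2) * cfQ α (k+1) + cfQ α k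
    have := one_le_cfA h h0 (k+1)
    calc cfQ α (k+1) = 1 * cfQ α (k+1) := (one_mul _).symm
      _ ≤ cfA α (k+2) * cfQ α (k+1) := Nat.mul_le_mul_right _ this
      _ ≤ _ := Nat.le_add_right _ _

lemma cfQ_lower (h : Irrational α) (h0 : α ∈ Ioo (0:ℝ) 1) :
    ∀ k, 2^k ≤ 2 * (cfQ α k)^2 ∧ 2^(k+1) ≤ 2 * (cfQ α (k+1))^2 := by
  intro k
  induction k with
  | zero =>
    refine ⟨by simp [cfQ], ?_⟩
    have h1 := one_le_cfA h h0 0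
    have : cfQ α 1 = cfA α 1 := rfl
    rw [this]
    have h2 : 1 ≤ (cfA α 1)^2 := Nat.one_le_pow _ _ h1
    calc 2^(0+1) = 2 * 1 := by norm_num
      _ ≤ 2 * (cfA α 1)^2 := by omega
  | succ k ih =>
    refine ⟨ih.2, ?_⟩
    have hmono := cfQ_mono h h0 k
    have hq : 2 * cfQ α k ≤ cfQ α (k+2) := by
      show 2 * cfQ α k ≤ cfA α (k+2) * cfQ α (k+1) + cfQ α k
      have h1 := one_le_cfA h h0 (k+1)
      calc 2 * cfQ α k = cfQ α k + cfQ α k := two_mul _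
        _ ≤ cfQ α (k+1) + cfQ α k := by omega
        _ ≤ cfA α (k+2) * cfQ α (k+1) + cfQ α k := by
            have : cfQ α (k+1) ≤ cfA α (k+2) * cfQ α (k+1) := by
              calc cfQ α (k+1) = 1 * cfQ α (k+1) := (one_mul _).symm
                _ ≤ _ := Nat.mul_le_mul_right _ h1
            omega
    have h2k := ih.1
    calc 2^(k+2) = 4 * 2^k := by ring
      _ ≤ 4 * (2 * (cfQ α k)^2) := by omega
      _ = 2 * (2 * cfQ α k)^2 := by ring
      _ ≤ 2 * (cfQ α (k+2))^2 := by
          have := Nat.pow_le_pow_left hq 2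
          omega

lemma cfQ_upper (h : Irrational α) (h0 : α ∈ Ioo (0:ℝ) 1) :
    ∀ k, (cfQ α k : ℝ) ≤ ∏ i ∈ Finset.range k, 2 * (gaussMap^[i] α)⁻¹
      ∧ (cfQ α (k+1) : ℝ) ≤ ∏ i ∈ Finset.range (k+1), 2 * (gaussMap^[i] α)⁻¹ := by
  have hpos : ∀ i, 0 < (gaussMap^[i] α)⁻¹ := fun i => by
    have := (iter_mem h h0 i).2.1; positivity
  intro k
  induction k with
  | zero =>
    constructor
    · show ((1:ℕ):ℝ) ≤ ∏ i ∈ Finset.range 0, 2 * (gaussMap^[i] α)⁻¹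
      simp
    · have h1 := cfA_le h h0 0
      have : cfQ α 1 = cfA α 1 := rfl
      rw [this]
      simp only [zero_add, Finset.range_one, Finset.prod_singleton, Function.iterate_zero_apply]
      have := hpos 0
      simp only [Function.iterate_zero_apply] at this
      simp only [zero_add, Function.iterate_zero_apply] at h1
      nlinarith
  | succ k ih =>
    refine ⟨ih.2, ?_⟩
    have hstep : (cfQ α (k+2) : ℝ) ≤ 2 * (gaussMap^[k+1] α)⁻¹ * (cfQ α (k+1) : ℝ) := by
      have hcast : (cfQ α (k+2) : ℝ) = (cfA α (k+2) : ℝ) * (cfQ α (k+1) : ℝ) + (cfQ α k : ℝ) := by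
        show ((cfA α (k+2) * cfQ α (k+1) + cfQ α k : ℕ) : ℝ) = _
        push_cast; ring
      have hm : (cfQ α k : ℝ) ≤ (cfQ α (k+1) : ℝ) := by exact_mod_cast cfQ_mono h h0 k
      have h1 : (1:ℝ) ≤ (cfA α (k+2) : ℝ) := by exact_mod_cast one_le_cfA h h0 (k+1)
      have hle : (cfA α (k+2) : ℝ) ≤ (gaussMap^[k+1] α)⁻¹ := cfA_le h h0 (k+1)
      have hqnn : (0:ℝ) ≤ (cfQ α (k+1) : ℝ) := Nat.cast_nonneg _
      rw [hcast]
      nlinarith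
    calc (cfQ α (k+2) : ℝ) ≤ 2 * (gaussMap^[k+1] α)⁻¹ * (cfQ α (k+1) : ℝ) := hstep
      _ ≤ 2 * (gaussMap^[k+1] α)⁻¹ * ∏ i ∈ Finset.range (k+1), 2 * (gaussMap^[i] α)⁻¹ := by
          have := hpos (k+1)
          exact mul_le_mul_of_nonneg_left ih.2 (by positivity)
      _ = ∏ i ∈ Finset.range (k+2), 2 * (gaussMap^[i] α)⁻¹ := by
          conv_rhs => rw [Finset.prod_range_succ]
          ring

lemma PP_eq (h : Irrational α) (h0 : α ∈ Ioo (0:ℝ) 1) (k : ℕ) :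
    PP k α = ENNReal.ofReal (∏ i ∈ Finset.range k, (gaussMap^[i] α) ^ (-(1/2) : ℝ)) := by
  induction k with
  | zero => simp [PP]
  | succ k ih =>
    rw [PP, Finset.prod_range_succ, ← PP, ih, Finset.prod_range_succ]
    have ht := (iter_mem h h0 k).2.1
    rw [wE, ENNReal.ofReal_rpow_of_pos ht, ← ENNReal.ofReal_mul]
    exact Finset.prod_nonneg fun i _ => Real.rpow_nonneg ((iter_mem h h0 i).2.1).le _

end arith

lemma rpow_pow_inv_nat {x : ℝ} (hx : 0 ≤ x) {k : ℕ} (hk : k ≠ 0) :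
    (x ^ k) ^ ((1:ℝ)/k) = x := by
  rw [← Real.rpow_natCast x k, ← Real.rpow_mul hx, mul_one_div,
    div_self (by exact_mod_cast hk : (k:ℝ) ≠ 0), Real.rpow_one]

theorem cfQ_exponential_growth :
    ∃ a A : ℝ, 1 < a ∧ a < A ∧
      ∀ᵐ α ∂(MeasureTheory.volume.restrict (Set.Ioo (0:ℝ) 1)),
        ∀ᶠ k : ℕ in Filter.atTop,
          a < (cfQ α k : ℝ) ^ ((1:ℝ) / k) ∧ (cfQ α k : ℝ) ^ ((1:ℝ) / k) < A := by
  classical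
  set B : ℝ := CC.toReal + 1 with hBdef
  have hB1 : 1 ≤ B := by
    have : (0:ℝ) ≤ CC.toReal := ENNReal.toReal_nonneg
    simp only [hBdef]; linarith
  have hCCB : CC ≤ ENNReal.ofReal B := by
    rw [← ENNReal.ofReal_toReal CC_lt_top.ne]
    exact ENNReal.ofReal_le_ofReal (by simp only [hBdef]; linarith)
  refine ⟨9/8, 8*B^2, by norm_num, by nlinarith, ?_⟩
  set μ := MeasureTheory.volume.restrict (Set.Ioo (0:ℝ) 1) with hμ
  set s : ℕ → Set ℝ := fun k => {α | ENNReal.ofReal ((2*B)^k) ≤ PP k α} with hsdef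
  have hle : ∀ k, μ (s k) ≤ (ENNReal.ofReal (1/2))^k := by
    intro k
    have hεne : ENNReal.ofReal ((2*B)^k) ≠ 0 := by
      rw [Ne, ENNReal.ofReal_eq_zero, not_le]
      positivity
    have hεtop : ENNReal.ofReal ((2*B)^k) ≠ ∞ := ENNReal.ofReal_ne_top
    have hms := mul_meas_ge_le_lintegral₀ (μ := μ)
      ((measurable_PP k).aemeasurable) (ENNReal.ofReal ((2*B)^k))
    have hμle : μ (s k) ≤ (∫⁻ x, PP k x ∂μ) / ENNReal.ofReal ((2*B)^k) := by
      rw [ENNReal.le_div_iff_mul_le (Or.inl hεne) (Or.inl hεtop), mul_comm]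
      exact hms
    refine hμle.trans ?_
    rw [ENNReal.div_le_iff hεne hεtop]
    refine (lintegral_PP_le k).trans ?_
    calc CC ^ k ≤ (ENNReal.ofReal B)^k := pow_le_pow_left' hCCB k
      _ = (ENNReal.ofReal (1/2) * ENNReal.ofReal (2*B))^k := by
          rw [← ENNReal.ofReal_mul (by norm_num)]
          congr 2
          ring
      _ = (ENNReal.ofReal (1/2))^k * ENNReal.ofReal ((2*B)^k) := by
          rw [mul_pow, ENNReal.ofReal_pow (by positivity)]
  have hsum : (∑' k, μ (s k)) ≠ ∞ := by
    have h1 : (∑' k, μ (s k)) ≤ ∑' k : ℕ, (ENNReal.ofReal (1/2))^k :=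
      ENNReal.tsum_le_tsum hle
    rw [ENNReal.tsum_geometric] at h1
    refine ne_top_of_le_ne_top ?_ h1
    rw [Ne, ENNReal.inv_eq_top, tsub_eq_zero_iff_le, not_le]
    exact ENNReal.ofReal_lt_one.mpr (by norm_num)
  have hBC := MeasureTheory.ae_eventually_notMem hsum
  have hirr : ∀ᵐ α ∂μ, Irrational α := by
    have hnull : MeasureTheory.volume {x : ℝ | ¬ Irrational x} = 0 := by
      have he : {x : ℝ | ¬ Irrational x} = Set.range ((↑) : ℚ → ℝ) := by
        ext x; simp [Irrational]
      rw [he]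
      exact (Set.countable_range _).measure_zero _
    rw [MeasureTheory.ae_iff]
    exact le_antisymm
      (le_trans (Measure.restrict_apply_le _ _) hnull.le) (zero_le)
  have hmem : ∀ᵐ α ∂μ, α ∈ Ioo (0:ℝ) 1 := ae_restrict_mem measurableSet_Ioo
  filter_upwards [hBC, hirr, hmem] with α hα hirrα hmemα
  filter_upwards [hα, eventually_ge_atTop 2] with k hk1 hk2
  have hk0 : k ≠ 0 := by omega
  have hkpos : (0:ℝ) < 1/k := by
    have : (0:ℝ) < k := by exact_mod_cast Nat.pos_of_ne_zero hk0
    positivity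
  set q : ℝ := (cfQ α k : ℝ) with hqdef
  have hqnn : 0 ≤ q := Nat.cast_nonneg _
  constructor
  · -- lower bound
    have hnat := (cfQ_lower hirrα hmemα k).1
    have hcast : (2:ℝ)^k ≤ 2 * q^2 := by rw [hqdef]; exact_mod_cast hnat
    have h128 : (2:ℝ) < (128/81)^k := by
      calc (2:ℝ) < (128/81)^2 := by norm_num
        _ ≤ (128/81)^k := pow_le_pow_right₀ (by norm_num) hk2
    have hmm : (81/64:ℝ)^k * 2 < (81/64:ℝ)^k * (128/81)^k :=
      mul_lt_mul_of_pos_left h128 (by positivity)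
    have he2 : (81/64:ℝ)^k * (128/81:ℝ)^k = 2^k := by
      rw [← mul_pow]; norm_num
    have hsq : ((9/8:ℝ)^k)^2 = (81/64:ℝ)^k := by
      rw [← pow_mul, mul_comm, pow_mul]; norm_num
    have hq2 : ((9/8:ℝ)^k)^2 < q^2 := by
      rw [hsq]; nlinarith
    have hqlt : (9/8:ℝ)^k < q := lt_of_pow_lt_pow_left₀ 2 hqnn hq2
    have := Real.rpow_lt_rpow (by positivity) hqlt hkpos
    rwa [rpow_pow_inv_nat (by norm_num) hk0] at this
  · -- upper bound
    have hnot : PP k α < ENNReal.ofReal ((2*B)^k) := not_le.mp hk1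
    rw [PP_eq hirrα hmemα k] at hnot
    set Rh : ℝ := ∏ i ∈ Finset.range k, (gaussMap^[i] α) ^ (-(1/2) : ℝ) with hRh
    have hRhnn : 0 ≤ Rh :=
      Finset.prod_nonneg fun i _ => Real.rpow_nonneg ((iter_mem hirrα hmemα i).2.1).le _
    have hRhlt : Rh < (2*B)^k :=
      (ENNReal.ofReal_lt_ofReal_iff (by positivity)).mp hnot
    have hup := (cfQ_upper hirrα hmemα k).1
    have hprod : ∏ i ∈ Finset.range k, 2 * (gaussMap^[i] α)⁻¹ = 2^k * Rh^2 := by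
      rw [Finset.prod_mul_distrib, Finset.prod_const, Finset.card_range, hRh,
        ← Finset.prod_pow]
      congr 1
      refine Finset.prod_congr rfl fun i _ => ?_
      have ht := (iter_mem hirrα hmemα i).2.1
      rw [← Real.rpow_natCast ((gaussMap^[i] α) ^ (-(1/2):ℝ)) 2, ← Real.rpow_mul ht.le]
      rw [show (-(1/2:ℝ)) * (2:ℕ) = -1 by norm_num, Real.rpow_neg_one]
    have hq8 : q < (8*B^2)^k := by
      have h1 : q ≤ 2^k * Rh^2 := by rw [← hprod]; exact hup
      have h2 : Rh^2 < ((2*B)^k)^2 := by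
        apply pow_lt_pow_left₀ hRhlt hRhnn
        norm_num
      have h3 : (2:ℝ)^k * ((2*B)^k)^2 = (8*B^2)^k := by
        rw [← pow_mul, mul_comm k 2, pow_mul, ← mul_pow]
        congr 1
        ring
      nlinarith [pow_pos (by norm_num : (0:ℝ) < 2) k]
    have := Real.rpow_lt_rpow hqnn hq8 hkpos
    rwa [rpow_pow_inv_nat (by nlinarith) hk0] at this
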